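/- Let (X, μ) be a probability space, T : X → X a measure-preserving map, and f ∈ L¹(X, μ). Let ε, δ > 0. Suppose g is a measurable function with |g| ≤ C μ-almost everywhere and ‖f − g‖₁ ≤ δε, suppose p ≥ 1 is a natural number with ‖A_p g‖₁ ≤ δε/2, and suppose n₀ ≥ 1 is a natural number with n₀ ≥ 4(p−1)C/δ. Then μ({x : ∃ n ≥ n₀, |Aₙ f(x)| > 2δ}) ≤ 2ε. (This gives an explicit modulus of almost-sure convergence of the Birkhoff averages of an L¹ function.) -/

import Mathlib

open MeasureTheory Finset

/-- The `n`-th Birkhoff average of `f` along `T`: `Aₙ f = (1/n) ∑_{i<n} f ∘ T^i`. -/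
noncomputable def birkhoffAvg {X : Type*} (T : X → X) (f : X → ℝ) (n : ℕ) (x : X) : ℝ :=
  (n : ℝ)⁻¹ * ∑ i ∈ Finset.range n, f (T^[i] x)

section Aux

variable {X : Type*} (T : X → X) (h : X → ℝ)

/-- Birkhoff sums. -/
noncomputable def birkS (n : ℕ) (x : X) : ℝ := ∑ i ∈ Finset.range n, h (T^[i] x)

/-- Running maxima of Birkhoff sums (with `birkM 0 = 0`). -/
noncomputable def birkM : ℕ → X → ℝ
  | 0 => fun _ => 0
  | (N + 1) => fun x => max (birkM N x) (birkS T h (N + 1) x)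

variable {T h}

lemma birkS_succ (n : ℕ) (x : X) : birkS T h (n + 1) x = h x + birkS T h n (T x) := by
  unfold birkS
  rw [Finset.sum_range_succ']
  simp only [Function.iterate_succ_apply, Function.iterate_zero_apply]
  ring

lemma birkM_nonneg (N : ℕ) (x : X) : 0 ≤ birkM T h N x := by
  induction N with
  | zero => simp [birkM]
  | succ N ih => exact le_trans ih (le_max_left _ _)

lemma birkM_mono {N N' : ℕ} (hN : N ≤ N') (x : X) : birkM T h N x ≤ birkM T h N' x := by
  induction N' with
  | zero => simp_all
  | succ N' ih =>
    rcases Nat.lt_or_ge N (N' + 1) with hlt | hge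
    · exact le_trans (ih (Nat.lt_succ_iff.mp hlt)) (le_max_left _ _)
    · have : N = N' + 1 := le_antisymm hN hge
      subst this; rfl

lemma birkS_le_birkM (N : ℕ) (x : X) : birkS T h N x ≤ birkM T h N x := by
  cases N with
  | zero => simp [birkS, birkM]
  | succ N => exact le_max_right _ _

lemma birkM_key (N : ℕ) (x : X) :
    birkM T h N x ≤ max 0 (h x + birkM T h N (T x)) := by
  induction N with
  | zero => simp [birkM]
  | succ N ih =>
    refine max_le ?_ ?_
    · exact le_trans ih (max_le_max le_rfl (by
        have := birkM_mono (T := T) (h := h) (Nat.le_succ N) (T x); linarith))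
    · refine le_trans ?_ (le_max_right _ _)
      rw [birkS_succ]
      have h1 : birkS T h N (T x) ≤ birkM T h N (T x) := birkS_le_birkM N (T x)
      have h2 : birkM T h N (T x) ≤ birkM T h (N + 1) (T x) := birkM_mono (Nat.le_succ N) _
      linarith

lemma birkM_pos_exists {N : ℕ} {x : X} (hpos : 0 < birkM T h N x) :
    ∃ n, 1 ≤ n ∧ 0 < birkS T h n x := by
  induction N with
  | zero => simp [birkM] at hpos
  | succ N ih =>
    rcases lt_max_iff.mp hpos with h1 | h2
    · exact ih h1
    · exact ⟨N + 1, Nat.succ_le_succ (Nat.zero_le N), h2⟩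

lemma birkS_measurable [MeasurableSpace X] (hTm : Measurable T) (hm : Measurable h) (n : ℕ) :
    Measurable (birkS T h n) := by
  apply Finset.measurable_sum
  intro i _
  exact hm.comp (hTm.iterate i)

lemma birkM_measurable [MeasurableSpace X] (hTm : Measurable T) (hm : Measurable h) (N : ℕ) :
    Measurable (birkM T h N) := by
  induction N with
  | zero => exact measurable_const
  | succ N ih => exact Measurable.max ih (birkS_measurable hTm hm _)

lemma birkS_integrable [MeasurableSpace X] {μ : Measure X} (hT : MeasurePreserving T μ μ)
    (hi : Integrable h μ) (n : ℕ) : Integrable (birkS T h n) μ := by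
  apply integrable_finset_sum
  intro i _
  exact ((hT.iterate i).integrable_comp hi.aestronglyMeasurable).mpr hi

lemma birkM_integrable [MeasurableSpace X] {μ : Measure X} [IsFiniteMeasure μ] (hT : MeasurePreserving T μ μ)
    (hi : Integrable h μ) (N : ℕ) : Integrable (birkM T h N) μ := by
  induction N with
  | zero => exact integrable_const 0
  | succ N ih =>
    have := ih.sup (birkS_integrable hT hi (N + 1))
    simpa [Pi.sup_def, birkM] using this

/-- Hopf's maximal ergodic inequality, in the form needed here. -/
lemma maximal_ergodic {X : Type*} [MeasurableSpace X] (μ : Measure X) [IsProbabilityMeasure μ]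
    (T : X → X) (hT : MeasurePreserving T μ μ)
    (φ : X → ℝ) (hφm : Measurable φ) (hφ0 : ∀ x, 0 ≤ φ x) (hφi : Integrable φ μ)
    (l : ℝ) (hl : 0 < l) :
    μ {x | ∃ n, 1 ≤ n ∧ l < birkhoffAvg T φ n x} ≤
      ENNReal.ofReal ((∫ x, φ x ∂μ) / l) := by
  have hTm : Measurable T := hT.measurable
  set h : X → ℝ := fun x => φ x - l with hh
  have hhm : Measurable h := hφm.sub measurable_const
  have hhi : Integrable h μ := hφi.sub (integrable_const l)
  have hSrel : ∀ n x, birkS T h n x = birkS T φ n x - n * l := by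
    intro n x
    simp only [birkS, hh, Finset.sum_sub_distrib, Finset.sum_const, Finset.card_range,
      nsmul_eq_mul]
  -- the sets
  set A : ℕ → Set X := fun N => {x | 0 < birkM T h N x} with hA
  have hAm : ∀ N, MeasurableSet (A N) :=
    fun N => measurableSet_lt measurable_const (birkM_measurable hTm hhm N)
  -- set identification
  have hset : {x | ∃ n, 1 ≤ n ∧ l < birkhoffAvg T φ n x} = ⋃ N, A N := by
    ext x
    simp only [Set.mem_setOf_eq, Set.mem_iUnion]
    constructor
    · rintro ⟨n, hn1, hn⟩
      refine ⟨n, ?_⟩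
      have hnpos : (0 : ℝ) < n := by exact_mod_cast hn1
      have hS : 0 < birkS T h n x := by
        rw [hSrel]
        have : n * l < n * birkhoffAvg T φ n x := by
          exact (mul_lt_mul_iff_right₀ hnpos).mpr hn
        rw [birkhoffAvg, ← mul_assoc, mul_inv_cancel₀ (ne_of_gt hnpos), one_mul] at this
        unfold birkS
        linarith
      exact lt_of_lt_of_le hS (birkS_le_birkM n x)
    · rintro ⟨N, hN⟩
      obtain ⟨n, hn1, hn⟩ := birkM_pos_exists hN
      refine ⟨n, hn1, ?_⟩
      have hnpos : (0 : ℝ) < n := by exact_mod_cast hn1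
      rw [hSrel] at hn
      have : n * l < birkS T φ n x := by linarith
      rw [birkhoffAvg]
      have := (mul_lt_mul_iff_right₀ (inv_pos.mpr hnpos)).mpr this
      rw [← mul_assoc, inv_mul_cancel₀ (ne_of_gt hnpos), one_mul] at this
      exact this
  -- per-N bound
  have hbound : ∀ N, μ (A N) ≤ ENNReal.ofReal ((∫ x, φ x ∂μ) / l) := by
    intro N
    set M : X → ℝ := birkM T h N with hM
    have hMm : Measurable M := birkM_measurable hTm hhm N
    have hMi : Integrable M μ := birkM_integrable hT hhi N
    have hMTi : Integrable (fun x => M (T x)) μ :=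
      (hT.integrable_comp hMi.aestronglyMeasurable).mpr hMi
    have hMT : ∫ x, M (T x) ∂μ = ∫ x, M x ∂μ := by
      rw [← integral_map hTm.aemeasurable hMm.aestronglyMeasurable, hT.map_eq]
    -- ∫_{A N} h ≥ 0
    have hstep : 0 ≤ ∫ x in A N, h x ∂μ := by
      have hdiffi : Integrable (fun x => M x - M (T x)) μ := hMi.sub hMTi
      have e0 : ∫ x, (M x - M (T x)) ∂μ = 0 := by
        rw [integral_sub hMi hMTi, hMT, sub_self]
      have e1 : ∫ x in A N, (M x - M (T x)) ∂μ ≤ ∫ x in A N, h x ∂μ := by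
        apply setIntegral_mono_on hdiffi.integrableOn hhi.integrableOn (hAm N)
        intro x hx
        have hkey := birkM_key (T := T) (h := h) N x
        have hxpos : 0 < M x := hx
        rcases le_max_iff.mp hkey with h0 | h1
        · linarith
        · have : M (T x) ≤ birkM T h N (T x) := le_rfl
          simp only [hM] at *
          linarith
      have e2 : ∫ x in (A N)ᶜ, (M x - M (T x)) ∂μ ≤ 0 := by
        apply setIntegral_nonpos (hAm N).compl
        intro x hx
        have h1 : ¬ (0 < M x) := hx
        have h2 : 0 ≤ M x := birkM_nonneg N x
        have h3 : 0 ≤ M (T x) := birkM_nonneg N (T x)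
        have : M x = 0 := le_antisymm (not_lt.mp h1) h2
        linarith
      have e3 := integral_add_compl (hAm N) hdiffi
      linarith
    -- translate to measure bound
    have hconst : ∫ x in A N, (l : ℝ) ∂μ = (μ (A N)).toReal * l := by
      rw [setIntegral_const]; simp [smul_eq_mul, Measure.real]
    have hsub : ∫ x in A N, h x ∂μ = (∫ x in A N, φ x ∂μ) - (μ (A N)).toReal * l := by
      rw [← hconst]
      exact integral_sub hφi.integrableOn (integrable_const l).integrableOn
    have hle : (μ (A N)).toReal * l ≤ ∫ x, φ x ∂μ := by
      have h4 : ∫ x in A N, φ x ∂μ ≤ ∫ x, φ x ∂μ :=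
        setIntegral_le_integral hφi (Filter.Eventually.of_forall hφ0)
      rw [hsub] at hstep
      linarith
    have hfin : μ (A N) ≠ ⊤ := measure_ne_top μ _
    rw [← ENNReal.ofReal_toReal hfin]
    apply ENNReal.ofReal_le_ofReal
    rw [le_div_iff₀ hl]
    exact hle
  rw [hset]
  have hdir : Directed (· ⊆ ·) A := by
    apply Monotone.directed_le
    intro N N' hNN' x hx
    exact lt_of_lt_of_le hx (birkM_mono hNN' x)
  rw [hdir.measure_iUnion]
  exact iSup_le hbound

lemma birkhoffAvg_sub {X : Type*} (T : X → X) (u v : X → ℝ) (n : ℕ) (x : X) :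
    birkhoffAvg T u n x - birkhoffAvg T v n x = birkhoffAvg T (fun y => u y - v y) n x := by
  simp only [birkhoffAvg, Finset.sum_sub_distrib, mul_sub]

lemma abs_birkhoffAvg_le {X : Type*} (T : X → X) (u : X → ℝ) (n : ℕ) (x : X) :
    |birkhoffAvg T u n x| ≤ birkhoffAvg T (fun y => |u y|) n x := by
  simp only [birkhoffAvg, abs_mul, abs_inv, Nat.abs_cast]
  gcongr
  exact Finset.abs_sum_le_sum_abs _ _

end Aux

/-- Explicit modulus of almost-sure convergence of the Birkhoff averages of an `L¹`
function: if `g` is a bounded (`|g| ≤ C` a.e.) measurable function with `‖f - g‖₁ ≤ δε` and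
`‖A_p g‖₁ ≤ δε/2`, then for `n₀ ≥ 4(p-1)C/δ` one has `μ{x : ∃ n ≥ n₀, |Aₙ f x| > 2δ} ≤ 2ε`. -/
theorem birkhoff_effective_as_convergence_L1 {X : Type*} [MeasurableSpace X]
    (μ : Measure X) [IsProbabilityMeasure μ]
    (T : X → X) (hT : MeasurePreserving T μ μ)
    (f : X → ℝ) (hf : Integrable f μ)
    (ε δ : ℝ) (hε : 0 < ε) (hδ : 0 < δ)
    (g : X → ℝ) (hgm : Measurable g) (C : ℝ) (hgC : ∀ᵐ x ∂μ, |g x| ≤ C)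
    (hfg : ∫ x, |f x - g x| ∂μ ≤ δ * ε)
    (p : ℕ) (hp : 1 ≤ p) (hAp : ∫ x, |birkhoffAvg T g p x| ∂μ ≤ δ * ε / 2)
    (n₀ : ℕ) (hn₀ : 1 ≤ n₀) (hn₀C : 4 * ((p : ℝ) - 1) * C / δ ≤ (n₀ : ℝ)) :
    μ {x | ∃ n, n₀ ≤ n ∧ 2 * δ < |birkhoffAvg T f n x|} ≤ ENNReal.ofReal (2 * ε) := by
  have hTm : Measurable T := hT.measurable
  have hC0 : 0 ≤ C := by
    obtain ⟨x, hx⟩ := hgC.exists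
    exact (abs_nonneg _).trans hx
  -- g is integrable
  have hgi : Integrable g μ := by
    refine memLp_one_iff_integrable.mp ?_
    exact MemLp.of_bound hgm.aestronglyMeasurable C
      (by simpa [Real.norm_eq_abs] using hgC)
  -- measurable representative of f
  set f' : X → ℝ := hf.aestronglyMeasurable.mk f with hf'def
  have hf'm : Measurable f' := hf.aestronglyMeasurable.stronglyMeasurable_mk.measurable
  have hff' : f =ᵐ[μ] f' := hf.aestronglyMeasurable.ae_eq_mk
  have hf'i : Integrable f' μ := hf.congr hff'
  -- the good set G
  set G : Set X := {x | (∀ m, |g (T^[m] x)| ≤ C) ∧ (∀ m, f (T^[m] x) = f' (T^[m] x))} with hG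
  have hGae : ∀ᵐ x ∂μ, x ∈ G := by
    simp only [hG, Set.mem_setOf_eq]
    rw [Filter.eventually_and]
    constructor
    · rw [MeasureTheory.ae_all_iff]
      intro m
      exact (hT.iterate m).quasiMeasurePreserving.ae hgC
    · rw [MeasureTheory.ae_all_iff]
      intro m
      exact (hT.iterate m).quasiMeasurePreserving.ae hff'
  -- the two maximal functions
  set φ₁ : X → ℝ := fun x => |f' x - g x| with hφ₁
  set φ₂ : X → ℝ := fun x => |birkhoffAvg T g p x| with hφ₂
  have hφ₁m : Measurable φ₁ := (hf'm.sub hgm).abs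
  have hφ₂m : Measurable φ₂ := by
    apply Measurable.abs
    apply Measurable.const_mul
    exact Finset.measurable_sum _ (fun i _ => hgm.comp (hTm.iterate i))
  have hφ₁i : Integrable φ₁ μ := (hf'i.sub hgi).abs
  have hφ₂i : Integrable φ₂ μ := by
    apply Integrable.abs
    apply Integrable.const_mul
    exact integrable_finset_sum _
      (fun i _ => ((hT.iterate i).integrable_comp hgi.aestronglyMeasurable).mpr hgi)
  have hφ₁int : ∫ x, φ₁ x ∂μ ≤ δ * ε := by
    have : ∫ x, φ₁ x ∂μ = ∫ x, |f x - g x| ∂μ := by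
      apply integral_congr_ae
      filter_upwards [hff'] with x hx
      simp [hφ₁, hx]
    linarith
  set E₁ : Set X := {x | ∃ n, 1 ≤ n ∧ δ < birkhoffAvg T φ₁ n x} with hE₁
  set E₂ : Set X := {x | ∃ n, 1 ≤ n ∧ δ / 2 < birkhoffAvg T φ₂ n x} with hE₂
  have hμE₁ : μ E₁ ≤ ENNReal.ofReal ε := by
    refine (maximal_ergodic μ T hT φ₁ hφ₁m (fun x => abs_nonneg _) hφ₁i δ hδ).trans ?_
    apply ENNReal.ofReal_le_ofReal
    rw [div_le_iff₀ hδ]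
    linarith
  have hμE₂ : μ E₂ ≤ ENNReal.ofReal ε := by
    refine (maximal_ergodic μ T hT φ₂ hφ₂m (fun x => abs_nonneg _) hφ₂i (δ / 2)
      (by linarith)).trans ?_
    apply ENNReal.ofReal_le_ofReal
    rw [div_le_iff₀ (by linarith : (0:ℝ) < δ / 2)]
    linarith
  -- inclusion
  have hincl : {x | ∃ n, n₀ ≤ n ∧ 2 * δ < |birkhoffAvg T f n x|} ⊆ E₁ ∪ E₂ ∪ Gᶜ := by
    intro x hx
    by_contra hcon
    simp only [Set.mem_union, not_or] at hcon
    obtain ⟨⟨hxE₁, hxE₂⟩, hxG⟩ := hcon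
    have hxG' : x ∈ G := Set.notMem_compl_iff.mp hxG
    obtain ⟨hgb, hfeq⟩ := hxG'
    obtain ⟨n, hn₀n, hn⟩ := hx
    have hn1 : 1 ≤ n := le_trans hn₀ hn₀n
    have hnpos : (0 : ℝ) < n := by exact_mod_cast hn1
    have hppos : (0 : ℝ) < p := by exact_mod_cast hp
    -- A_n f x = A_n f' x
    have heq : birkhoffAvg T f n x = birkhoffAvg T f' n x := by
      unfold birkhoffAvg
      congr 1
      exact Finset.sum_congr rfl (fun i _ => hfeq i)
    -- bound 1 : |A_n f' - A_n g| ≤ δ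
    have hb1 : |birkhoffAvg T f' n x - birkhoffAvg T g n x| ≤ δ := by
      rw [birkhoffAvg_sub]
      refine (abs_birkhoffAvg_le T _ n x).trans ?_
      simp only [hE₁, Set.mem_setOf_eq, not_exists, not_and, not_lt] at hxE₁
      exact hxE₁ n hn1
    -- bound 3 : |A_n (A_p g)| ≤ δ/2
    have hb3 : |birkhoffAvg T (birkhoffAvg T g p) n x| ≤ δ / 2 := by
      refine (abs_birkhoffAvg_le T _ n x).trans ?_
      simp only [hE₂, Set.mem_setOf_eq, not_exists, not_and, not_lt] at hxE₂
      exact hxE₂ n hn1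
    -- bound 2 : |A_n g - A_n (A_p g)| ≤ δ/2
    have hb2 : |birkhoffAvg T g n x - birkhoffAvg T (birkhoffAvg T g p) n x| ≤ δ / 2 := by
      set S : ℕ → ℝ := fun j => g (T^[j] x) with hS
      have hSb : ∀ j, |S j| ≤ C := fun j => hgb j
      have hrw : birkhoffAvg T (birkhoffAvg T g p) n x =
          (n : ℝ)⁻¹ * ((p : ℝ)⁻¹ * ∑ j ∈ Finset.range n, ∑ k ∈ Finset.range p, S (k + j)) := by
        simp only [birkhoffAvg, hS, Finset.mul_sum, Function.iterate_add_apply]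
      have hrw2 : birkhoffAvg T g n x =
          (n : ℝ)⁻¹ * ((p : ℝ)⁻¹ * ∑ j ∈ Finset.range n, ∑ k ∈ Finset.range p, S j) := by
        have hinner : ∀ j ∈ Finset.range n, ∑ _k ∈ Finset.range p, S j = (p : ℝ) * S j := by
          intro j _
          rw [Finset.sum_const, Finset.card_range, nsmul_eq_mul]
        conv_rhs => rw [Finset.sum_congr rfl hinner, ← Finset.mul_sum,
          ← mul_assoc ((p : ℝ)⁻¹), inv_mul_cancel₀ (ne_of_gt hppos), one_mul]
        rfl
      -- per-k bound after swapping sums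
      have hswap : ∀ (u : ℕ → ℕ → ℝ), ∑ j ∈ Finset.range n, ∑ k ∈ Finset.range p, u j k =
          ∑ k ∈ Finset.range p, ∑ j ∈ Finset.range n, u j k := fun u => Finset.sum_comm
      have hkey : |∑ j ∈ Finset.range n, ∑ k ∈ Finset.range p, S j -
          ∑ j ∈ Finset.range n, ∑ k ∈ Finset.range p, S (k + j)| ≤
          (p : ℝ) * (2 * ((p : ℝ) - 1) * C) := by
        rw [hswap (fun j k => S j), hswap (fun j k => S (k + j)), ← Finset.sum_sub_distrib]
        refine (Finset.abs_sum_le_sum_abs _ _).trans ?_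
        have hterm : ∀ k ∈ Finset.range p,
            |∑ j ∈ Finset.range n, S j - ∑ j ∈ Finset.range n, S (k + j)| ≤
              2 * ((p : ℝ) - 1) * C := by
          intro k hk
          have hk' : k ≤ p - 1 := Nat.le_sub_one_of_lt (Finset.mem_range.mp hk)
          have hkr : (k : ℝ) ≤ (p : ℝ) - 1 := by
            have : (k : ℝ) + 1 ≤ (p : ℝ) := by exact_mod_cast Finset.mem_range.mp hk
            linarith
          have hre : ∑ j ∈ Finset.range n, S (k + j) = ∑ j ∈ Finset.Ico k (k + n), S j := by
            rw [Finset.sum_Ico_eq_sum_range]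
            simp
          have h1 : ∑ j ∈ Finset.range (k + n), S j =
              ∑ j ∈ Finset.range k, S j + ∑ j ∈ Finset.Ico k (k + n), S j := by
            simp only [Finset.range_eq_Ico]
            exact (Finset.sum_Ico_consecutive _ (Nat.zero_le k) (Nat.le_add_right k n)).symm
          have h2 : ∑ j ∈ Finset.range (k + n), S j =
              ∑ j ∈ Finset.range n, S j + ∑ j ∈ Finset.Ico n (k + n), S j := by
            simp only [Finset.range_eq_Ico]
            exact (Finset.sum_Ico_consecutive _ (Nat.zero_le n)
              (by omega : n ≤ k + n)).symm
          have hdiff : ∑ j ∈ Finset.range n, S j - ∑ j ∈ Finset.Ico k (k + n), S j =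
              ∑ j ∈ Finset.range k, S j - ∑ j ∈ Finset.Ico n (k + n), S j := by
            linarith
          rw [hre, hdiff]
          have hbnd1 : |∑ j ∈ Finset.range k, S j| ≤ (k : ℝ) * C := by
            refine (Finset.abs_sum_le_sum_abs _ _).trans ?_
            calc ∑ j ∈ Finset.range k, |S j| ≤ ∑ _j ∈ Finset.range k, C :=
                  Finset.sum_le_sum (fun j _ => hSb j)
              _ = (k : ℝ) * C := by simp [mul_comm]
          have hbnd2 : |∑ j ∈ Finset.Ico n (k + n), S j| ≤ (k : ℝ) * C := by
            refine (Finset.abs_sum_le_sum_abs _ _).trans ?_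
            calc ∑ j ∈ Finset.Ico n (k + n), |S j| ≤ ∑ _j ∈ Finset.Ico n (k + n), C :=
                  Finset.sum_le_sum (fun j _ => hSb j)
              _ = (k : ℝ) * C := by
                  rw [Finset.sum_const, Nat.card_Ico]
                  simp [mul_comm]
          calc |∑ j ∈ Finset.range k, S j - ∑ j ∈ Finset.Ico n (k + n), S j| ≤
                |∑ j ∈ Finset.range k, S j| + |∑ j ∈ Finset.Ico n (k + n), S j| :=
                abs_sub _ _
            _ ≤ (k : ℝ) * C + (k : ℝ) * C := add_le_add hbnd1 hbnd2
            _ ≤ 2 * ((p : ℝ) - 1) * C := by nlinarith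
        calc ∑ k ∈ Finset.range p,
              |∑ j ∈ Finset.range n, S j - ∑ j ∈ Finset.range n, S (k + j)| ≤
              ∑ _k ∈ Finset.range p, 2 * ((p : ℝ) - 1) * C :=
              Finset.sum_le_sum hterm
          _ = (p : ℝ) * (2 * ((p : ℝ) - 1) * C) := by simp [mul_comm]
      rw [hrw, hrw2, ← mul_sub, ← mul_sub, abs_mul, abs_mul, abs_inv, abs_inv,
        Nat.abs_cast, Nat.abs_cast]
      have hstep : (n : ℝ)⁻¹ * ((p : ℝ)⁻¹ * |∑ j ∈ Finset.range n, ∑ k ∈ Finset.range p, S j -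
          ∑ j ∈ Finset.range n, ∑ k ∈ Finset.range p, S (k + j)|) ≤
          (n : ℝ)⁻¹ * ((p : ℝ)⁻¹ * ((p : ℝ) * (2 * ((p : ℝ) - 1) * C))) := by
        gcongr
      refine hstep.trans ?_
      rw [← mul_assoc ((p : ℝ)⁻¹), inv_mul_cancel₀ (ne_of_gt hppos), one_mul]
      -- (n)⁻¹ * (2(p-1)C) ≤ δ/2
      have hn₀pos : (0 : ℝ) < n₀ := by exact_mod_cast hn₀
      have hnn₀ : (n₀ : ℝ) ≤ (n : ℝ) := by exact_mod_cast hn₀n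
      have hp1 : (0 : ℝ) ≤ (p : ℝ) - 1 := by
        have : (1 : ℝ) ≤ (p : ℝ) := by exact_mod_cast hp
        linarith
      have h4 : 4 * ((p : ℝ) - 1) * C ≤ (n₀ : ℝ) * δ := by
        rw [div_le_iff₀ hδ] at hn₀C
        linarith
      have : (n : ℝ)⁻¹ * (2 * ((p : ℝ) - 1) * C) ≤ (n₀ : ℝ)⁻¹ * (2 * ((p : ℝ) - 1) * C) := by
        gcongr
      refine this.trans ?_
      rw [inv_mul_le_iff₀ hn₀pos]
      nlinarith
    -- combine
    rw [heq] at hn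
    have : |birkhoffAvg T f' n x| ≤ 2 * δ := by
      have t1 := abs_sub_abs_le_abs_sub (birkhoffAvg T f' n x) (birkhoffAvg T g n x)
      have t2 := abs_sub_abs_le_abs_sub (birkhoffAvg T g n x)
        (birkhoffAvg T (birkhoffAvg T g p) n x)
      linarith [abs_nonneg (birkhoffAvg T f' n x)]
    linarith
  calc μ {x | ∃ n, n₀ ≤ n ∧ 2 * δ < |birkhoffAvg T f n x|} ≤ μ (E₁ ∪ E₂ ∪ Gᶜ) :=
        measure_mono hincl
    _ ≤ μ (E₁ ∪ E₂) + μ Gᶜ := measure_union_le _ _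
    _ = μ (E₁ ∪ E₂) := by
        have : μ Gᶜ = 0 := by
          have := MeasureTheory.ae_iff.mp hGae
          simpa [Set.compl_def] using this
        rw [this, add_zero]
    _ ≤ μ E₁ + μ E₂ := measure_union_le _ _
    _ ≤ ENNReal.ofReal ε + ENNReal.ofReal ε := add_le_add hμE₁ hμE₂
    _ = ENNReal.ofReal (2 * ε) := by
        rw [two_mul, ENNReal.ofReal_add (le_of_lt hε) (le_of_lt hε)]
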